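/- As x → 0⁺, the quantity ∫ₓ^∞ e^{-u} (log u)/u du + (log x)²/2 converges to γ²/2 + π²/12. -/

import Mathlib

open MeasureTheory Filter Set Asymptotics Topology

noncomputable section

namespace GammaAux

/-- exp(-t) as complex valued -/
def fE : ℝ → ℂ := fun t => (Real.exp (-t) : ℂ)

def G1 : ℂ → ℂ := mellin fun t => Real.log t • fE t
def G2 : ℂ → ℂ := mellin fun t => Real.log t • Real.log t • fE t

lemma fE_locInt : LocallyIntegrableOn fE (Ioi 0) := by
  refine (Continuous.continuousOn ?_).locallyIntegrableOn measurableSet_Ioi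
  exact Complex.continuous_ofReal.comp (Real.continuous_exp.comp continuous_neg)

lemma f1_locInt : LocallyIntegrableOn (fun t => Real.log t • fE t) (Ioi 0) := by
  refine ContinuousOn.locallyIntegrableOn ?_ measurableSet_Ioi
  exact (Real.continuousOn_log.mono (by intro x hx; exact ne_of_gt hx)).smul
    ((Complex.continuous_ofReal.comp (Real.continuous_exp.comp continuous_neg)).continuousOn)

lemma fE_top (a : ℝ) : fE =O[atTop] (· ^ (-a)) := by
  rw [← isBigO_norm_left]
  simp_rw [fE, Complex.norm_real, isBigO_norm_left]
  simpa only [neg_one_mul] using (isLittleO_exp_neg_mul_rpow_atTop zero_lt_one _).isBigO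

lemma fE_bot : fE =O[𝓝[>] 0] (· ^ (-(0:ℝ))) := by
  simp_rw [neg_zero, Real.rpow_zero]
  refine isBigO_const_of_tendsto (?_ : Tendsto _ _ (𝓝 (1 : ℂ))) one_ne_zero
  rw [(by simp : (1 : ℂ) = (Real.exp (-0) : ℂ))]
  exact (Complex.continuous_ofReal.comp
    (Real.continuous_exp.comp continuous_neg)).continuousWithinAt

lemma hasDerivAt_mellin_fE {s : ℂ} (hs : 0 < s.re) :
    HasDerivAt (mellin fE) (G1 s) s :=
  (mellin_hasDerivAt_of_isBigO_rpow fE_locInt (fE_top (s.re + 1)) (lt_add_one _)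
    fE_bot hs).2

lemma G2_conv_and_deriv {s : ℂ} (hs : 0 < s.re) :
    MellinConvergent (fun t => Real.log t • Real.log t • fE t) s ∧
      HasDerivAt G1 (G2 s) s := by
  refine mellin_hasDerivAt_of_isBigO_rpow (a := s.re + 1) (b := s.re / 2) f1_locInt ?_ ?_ ?_ ?_
  · exact isBigO_rpow_top_log_smul (by linarith) (fE_top (s.re + 2))
  · linarith
  · exact isBigO_rpow_zero_log_smul (by linarith) fE_bot
  · linarith

lemma hasDerivAt_Gamma {s : ℂ} (hs : 0 < s.re) :
    HasDerivAt Complex.Gamma (G1 s) s := by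
  refine (hasDerivAt_mellin_fE hs).congr_of_eventuallyEq ?_
  have : {z : ℂ | 0 < z.re} ∈ 𝓝 s :=
    (isOpen_lt continuous_const Complex.continuous_re).mem_nhds hs
  filter_upwards [this] with z hz
  rw [Complex.Gamma_eq_integral hz, Complex.GammaIntegral_eq_mellin]; rfl

lemma G1_one : G1 1 = -(Real.eulerMascheroniConstant : ℂ) :=
  (hasDerivAt_Gamma (by norm_num)).unique Complex.hasDerivAt_Gamma_one

/-- The function H(z) = Γ(1+z)Γ(1-z). -/
def H : ℂ → ℂ := fun z => Complex.Gamma (1 + z) * Complex.Gamma (1 - z)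

def K : ℂ → ℂ := fun z => G1 (1 + z) * Complex.Gamma (1 - z)
  - Complex.Gamma (1 + z) * G1 (1 - z)

lemma re_pos_of_mem_ball {z : ℂ} (hz : ‖z‖ < 1) : 0 < (1 + z).re ∧ 0 < (1 - z).re := by
  have h1 : |z.re| ≤ ‖z‖ := Complex.abs_re_le_norm z
  constructor <;> · simp only [Complex.add_re, Complex.sub_re, Complex.one_re]
                    cases' abs_le.mp h1 with h2 h3
                    linarith

lemma hasDerivAt_H {z : ℂ} (hz : ‖z‖ < 1) : HasDerivAt H (K z) z := by
  obtain ⟨h1, h2⟩ := re_pos_of_mem_ball hz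
  have d1 : HasDerivAt (fun z : ℂ => Complex.Gamma (1 + z)) (G1 (1 + z)) z := by
    simpa [Function.comp_def] using (hasDerivAt_Gamma h1).comp z ((hasDerivAt_id z).const_add 1)
  have d2 : HasDerivAt (fun z : ℂ => Complex.Gamma (1 - z)) (-G1 (1 - z)) z := by
    simpa [Function.comp_def] using (hasDerivAt_Gamma h2).comp z ((hasDerivAt_id z).const_sub 1)
  rw [show H = fun z => Complex.Gamma (1 + z) * Complex.Gamma (1 - z) from rfl]
  simpa [K, mul_comm, sub_eq_add_neg, mul_neg, Pi.mul_def] using d1.mul d2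

lemma hasDerivAt_K : HasDerivAt K (2 * G2 1 - 2 * (G1 1) ^ 2) 0 := by
  have h1 : (0:ℝ) < (1 + (0:ℂ)).re := by norm_num
  have h2 : (0:ℝ) < (1 - (0:ℂ)).re := by norm_num
  have dG1p : HasDerivAt (fun z : ℂ => G1 (1 + z)) (G2 (1 + 0)) 0 := by
    simpa [Function.comp_def] using ((G2_conv_and_deriv h1).2.comp 0 ((hasDerivAt_id (0:ℂ)).const_add 1))
  have dG1m : HasDerivAt (fun z : ℂ => G1 (1 - z)) (-G2 (1 - 0)) 0 := by
    simpa [Function.comp_def] using ((G2_conv_and_deriv h2).2.comp 0 ((hasDerivAt_id (0:ℂ)).const_sub 1))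
  have dGp : HasDerivAt (fun z : ℂ => Complex.Gamma (1 + z)) (G1 (1 + 0)) 0 := by
    simpa [Function.comp_def] using ((hasDerivAt_Gamma h1).comp 0 ((hasDerivAt_id (0:ℂ)).const_add 1))
  have dGm : HasDerivAt (fun z : ℂ => Complex.Gamma (1 - z)) (-G1 (1 - 0)) 0 := by
    simpa [Function.comp_def] using ((hasDerivAt_Gamma h2).comp 0 ((hasDerivAt_id (0:ℂ)).const_sub 1))
  have := (dG1p.mul dGm).sub (dGp.mul dG1m)
  simp only [add_zero, sub_zero, Complex.Gamma_one, Pi.mul_def, Pi.sub_def] at this dG1p dG1m dGp dGm ⊢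
  refine this.congr_deriv ?_
  ring

end GammaAux

end

namespace GammaAux

open Complex in
lemma taylor_tendsto {f : ℂ → ℂ} {p : FormalMultilinearSeries ℂ ℂ ℂ}
    (hf : HasFPowerSeriesAt f p 0) (n : ℕ) :
    Tendsto (fun z : ℂ => (f z - ∑ k ∈ Finset.range n, z ^ k * p.coeff k) / z ^ n)
      (𝓝[≠] (0:ℂ)) (𝓝 (p.coeff n)) := by
  have hO := hf.isBigO_sub_partialSum_pow (n + 1)
  simp only [zero_add] at hO
  have key : Tendsto (fun y : ℂ => (f y - p.partialSum (n + 1) y) / y ^ n)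
      (𝓝[≠] (0:ℂ)) (𝓝 0) := by
    have hO2 : (fun y : ℂ => (f y - p.partialSum (n + 1) y) / y ^ n)
        =O[𝓝[≠] (0:ℂ)] (fun y : ℂ => y) := by
      obtain ⟨C, hC⟩ := hO.isBigOWith
      rw [isBigOWith_iff] at hC
      rw [isBigO_iff]
      refine ⟨C, ?_⟩
      filter_upwards [hC.filter_mono nhdsWithin_le_nhds, self_mem_nhdsWithin] with y hy hy0
      rw [mem_compl_iff, mem_singleton_iff] at hy0
      have hny : (0:ℝ) < ‖y‖ := norm_pos_iff.mpr hy0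
      rw [norm_div, norm_pow, div_le_iff₀ (by positivity)]
      calc ‖f y - p.partialSum (n + 1) y‖ ≤ C * ‖‖y‖ ^ (n+1)‖ := hy
        _ = C * ‖y‖ * ‖y‖ ^ n := by
            rw [Real.norm_of_nonneg (by positivity)]; ring
    exact hO2.trans_tendsto ((continuous_id.tendsto 0).mono_left nhdsWithin_le_nhds)
  have heq : ∀ᶠ z in 𝓝[≠] (0:ℂ),
      (f z - ∑ k ∈ Finset.range n, z ^ k * p.coeff k) / z ^ n
        = p.coeff n + (f z - p.partialSum (n + 1) z) / z ^ n := by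
    filter_upwards [self_mem_nhdsWithin] with z hz
    rw [mem_compl_iff, mem_singleton_iff] at hz
    have hzn : z ^ n ≠ 0 := pow_ne_zero _ hz
    have hps : p.partialSum (n + 1) z
        = (∑ k ∈ Finset.range n, z ^ k * p.coeff k) + z ^ n * p.coeff n := by
      rw [FormalMultilinearSeries.partialSum, Finset.sum_range_succ]
      congr 1
      · exact Finset.sum_congr rfl fun k _ => by
          rw [p.apply_eq_pow_smul_coeff, smul_eq_mul]
      · rw [p.apply_eq_pow_smul_coeff, smul_eq_mul]
    rw [hps]
    field_simp
    ring
  rw [Filter.tendsto_congr' heq]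
  simpa using tendsto_const_nhds.add key

lemma analyticAt_H : AnalyticAt ℂ H 0 := by
  refine DifferentiableOn.analyticAt (s := Metric.ball 0 1)
    (fun z hz => ?_) (Metric.ball_mem_nhds 0 one_pos)
  exact (hasDerivAt_H (mem_ball_zero_iff.mp hz)).differentiableAt.differentiableWithinAt

lemma deriv_H_eventually : deriv H =ᶠ[𝓝 (0:ℂ)] K := by
  filter_upwards [Metric.ball_mem_nhds (0:ℂ) one_pos] with z hz
  exact (hasDerivAt_H (mem_ball_zero_iff.mp hz)).deriv

lemma H_tendsto : Tendsto (fun z : ℂ => (H z - 1) / z ^ 2) (𝓝[≠] (0:ℂ))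
    (𝓝 (G2 1 - (G1 1) ^ 2)) := by
  obtain ⟨p, hp⟩ := analyticAt_H
  have c0 : p.coeff 0 = 1 := by
    have := hp.coeff_zero (fun _ => 1)
    rw [FormalMultilinearSeries.coeff]
    simpa [H, Complex.Gamma_one] using this
  have c1 : p.coeff 1 = 0 := by
    have h1 := hp.deriv
    have h2 : deriv H 0 = K 0 := (hasDerivAt_H (by norm_num)).deriv
    have h3 : K 0 = 0 := by simp [K, Complex.Gamma_one, mul_comm]
    have h4 : (p 1 fun _ => (1:ℂ)) = p.coeff 1 := by
      rw [p.apply_eq_pow_smul_coeff]; simp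
    rw [h2, h3] at h1
    rw [← h4, ← h1]
  have c2 : p.coeff 2 = G2 1 - (G1 1) ^ 2 := by
    obtain ⟨r, hr⟩ := hp
    have hfact := hr.factorial_smul (1:ℂ) 2
    have h4 : (p 2 fun _ => (1:ℂ)) = p.coeff 2 := by
      rw [p.apply_eq_pow_smul_coeff]; simp
    rw [h4, ← iteratedDeriv_eq_iteratedFDeriv] at hfact
    have h5 : iteratedDeriv 2 H 0 = deriv (deriv H) 0 := by
      rw [iteratedDeriv_succ, iteratedDeriv_one]
    have h6 : deriv (deriv H) 0 = deriv K 0 := deriv_H_eventually.deriv_eq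
    have h7 : deriv K 0 = 2 * G2 1 - 2 * (G1 1) ^ 2 := hasDerivAt_K.deriv
    rw [h5, h6, h7] at hfact
    have : ((2:ℕ).factorial : ℂ) * p.coeff 2 = 2 * G2 1 - 2 * (G1 1) ^ 2 := by
      rw [← hfact, nsmul_eq_mul]
    norm_num at this
    linear_combination this / 2
  have := taylor_tendsto hp 2
  rw [c2] at this
  refine this.congr' ?_
  filter_upwards with z
  congr 1
  rw [Finset.sum_range_succ, Finset.sum_range_one, c0, c1]
  ring

end GammaAux

namespace GammaAux

lemma sin_taylor :
    Tendsto (fun w : ℂ => (w - Complex.sin w) / w ^ 3) (𝓝[≠] (0:ℂ)) (𝓝 (1/6 : ℂ)) := by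
  set F : ℂ → ℂ := fun w => w - Complex.sin w with hF
  have hdF : deriv F = fun w => 1 - Complex.cos w := by
    funext w
    exact ((hasDerivAt_id w).sub (Complex.hasDerivAt_sin w)).deriv
  have hdF2 : deriv (fun w => 1 - Complex.cos w) = Complex.sin := by
    funext w
    simpa using (((Complex.hasDerivAt_cos w).const_sub 1)).deriv
  have hAn : AnalyticAt ℂ F 0 :=
    ((differentiable_id.sub Complex.differentiable_sin).analyticAt 0)
  obtain ⟨p, hp⟩ := hAn
  have c0 : p.coeff 0 = 0 := by
    have := hp.coeff_zero (fun _ => 1)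
    rw [FormalMultilinearSeries.coeff]
    simpa [hF] using this
  have c1 : p.coeff 1 = 0 := by
    have h1 := hp.deriv
    have h4 : (p 1 fun _ => (1:ℂ)) = p.coeff 1 := by
      rw [p.apply_eq_pow_smul_coeff]; simp
    rw [h4, hdF] at h1
    simp at h1
    exact h1.symm
  obtain ⟨r, hr⟩ := hp
  have c2 : p.coeff 2 = 0 := by
    have hfact := hr.factorial_smul (1:ℂ) 2
    have h4 : (p 2 fun _ => (1:ℂ)) = p.coeff 2 := by
      rw [p.apply_eq_pow_smul_coeff]; simp
    rw [h4, ← iteratedDeriv_eq_iteratedFDeriv] at hfact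
    have h5 : iteratedDeriv 2 F 0 = deriv (deriv F) 0 := by
      rw [iteratedDeriv_succ, iteratedDeriv_one]
    rw [h5, hdF, hdF2] at hfact
    simpa using hfact
  have c3 : p.coeff 3 = 1/6 := by
    have hfact := hr.factorial_smul (1:ℂ) 3
    have h4 : (p 3 fun _ => (1:ℂ)) = p.coeff 3 := by
      rw [p.apply_eq_pow_smul_coeff]; simp
    rw [h4, ← iteratedDeriv_eq_iteratedFDeriv] at hfact
    have h5 : iteratedDeriv 3 F 0 = deriv (deriv (deriv F)) 0 := by
      rw [iteratedDeriv_succ, iteratedDeriv_succ, iteratedDeriv_one]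
    rw [h5, hdF, hdF2, Complex.deriv_sin] at hfact
    simp only [Complex.cos_zero, show (3:ℕ).factorial = 6 from rfl] at hfact
    have : ((6:ℕ) : ℂ) * p.coeff 3 = 1 := by
      rw [← hfact, nsmul_eq_mul]
    push_cast at this
    linear_combination this / 6
  have := taylor_tendsto ⟨r, hr⟩ 3
  rw [c3] at this
  refine this.congr' ?_
  filter_upwards with z
  congr 1
  rw [Finset.sum_range_succ, Finset.sum_range_succ, Finset.sum_range_one, c0, c1, c2]
  ring

lemma pi_ne_zero_c : (Real.pi : ℂ) ≠ 0 :=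
  Complex.ofReal_ne_zero.mpr Real.pi_ne_zero

lemma tendsto_mul_pi : Tendsto (fun z : ℂ => (Real.pi : ℂ) * z) (𝓝[≠] (0:ℂ)) (𝓝[≠] (0:ℂ)) := by
  apply tendsto_nhdsWithin_of_tendsto_nhds_of_eventually_within
  · simpa [Pi.mul_def] using ((continuous_const.mul continuous_id).tendsto (0:ℂ)).mono_left
      (nhdsWithin_le_nhds)
  · filter_upwards [self_mem_nhdsWithin] with z hz
    rw [mem_compl_iff, mem_singleton_iff] at hz ⊢
    exact mul_ne_zero pi_ne_zero_c hz

lemma tendsto_div_sin : Tendsto (fun w : ℂ => w / Complex.sin w) (𝓝[≠] (0:ℂ)) (𝓝 1) := by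
  have h1 : Tendsto (fun w : ℂ => Complex.sin w / w) (𝓝[≠] (0:ℂ)) (𝓝 1) := by
    have := hasDerivAt_iff_tendsto_slope.mp (Complex.hasDerivAt_sin 0)
    simp only [Complex.cos_zero] at this
    refine this.congr' ?_
    filter_upwards [self_mem_nhdsWithin] with w hw
    rw [slope_def_field]
    simp [Complex.sin_zero]
  have h2 := h1.inv₀ one_ne_zero
  simp only [inv_one] at h2
  refine h2.congr' ?_
  filter_upwards with w
  rw [inv_div]

lemma sin_side_tendsto : Tendsto (fun z : ℂ => (H z - 1) / z ^ 2) (𝓝[≠] (0:ℂ))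
    (𝓝 ((Real.pi : ℂ) ^ 2 / 6)) := by
  have hA := sin_taylor.comp tendsto_mul_pi
  have hB := tendsto_div_sin.comp tendsto_mul_pi
  have := (hA.mul hB).const_mul ((Real.pi : ℂ) ^ 2)
  have heq : ∀ᶠ z in 𝓝[≠] (0:ℂ), (Real.pi : ℂ) ^ 2 *
      ((((Real.pi : ℂ) * z - Complex.sin ((Real.pi : ℂ) * z)) / ((Real.pi : ℂ) * z) ^ 3)
        * (((Real.pi : ℂ) * z) / Complex.sin ((Real.pi : ℂ) * z)))
      = (H z - 1) / z ^ 2 := by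
    have hball : ∀ᶠ z in 𝓝 (0:ℂ), ‖z‖ < 1 := by
      filter_upwards [Metric.ball_mem_nhds (0:ℂ) one_pos] with z hz
      exact mem_ball_zero_iff.mp hz
    filter_upwards [self_mem_nhdsWithin, hball.filter_mono nhdsWithin_le_nhds] with z hz hz1
    rw [mem_compl_iff, mem_singleton_iff] at hz
    have hsin : Complex.sin ((Real.pi : ℂ) * z) ≠ 0 := by
      intro h
      obtain ⟨k, hk⟩ := Complex.sin_eq_zero_iff.mp h
      have hzk : z = (k : ℂ) := by
        have := hk.trans (mul_comm (k : ℂ) (Real.pi : ℂ))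
        exact mul_left_cancel₀ pi_ne_zero_c this
      rw [hzk] at hz1 hz
      have habs : |(k:ℝ)| < 1 := by
        simpa using hz1
      have hk1 : |k| < 1 := by exact_mod_cast habs
      rw [Int.abs_lt_one_iff] at hk1
      rw [hk1] at hz
      simp at hz
    have hHz : H z = (Real.pi : ℂ) * z / Complex.sin ((Real.pi : ℂ) * z) := by
      have h1 : Complex.Gamma (1 + z) = z * Complex.Gamma z := by
        rw [add_comm]; exact Complex.Gamma_add_one z hz
      rw [H, h1, mul_assoc, Complex.Gamma_mul_Gamma_one_sub z]
      ring
    have hpi : (Real.pi : ℂ) ≠ 0 := pi_ne_zero_c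
    have hz' : z ≠ 0 := hz
    rw [hHz]
    field_simp
  rw [← Filter.tendsto_congr' heq]
  convert this using 2
  · rfl
  · ring

lemma G2_one : G2 1 = (Real.eulerMascheroniConstant : ℂ) ^ 2 + (Real.pi : ℂ) ^ 2 / 6 := by
  have h := tendsto_nhds_unique H_tendsto sin_side_tendsto
  rw [G1_one] at h
  linear_combination h

end GammaAux

namespace GammaAux

lemma integrable_exp_neg_log_sq :
    IntegrableOn (fun t : ℝ => Real.exp (-t) * (Real.log t) ^ 2) (Ioi 0) := by
  have h := (G2_conv_and_deriv (s := 1) (by norm_num)).1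
  rw [MellinConvergent] at h
  have h2 : IntegrableOn (fun t : ℝ => ((Real.exp (-t) * (Real.log t) ^ 2 : ℝ) : ℂ))
      (Ioi 0) := by
    refine h.congr_fun (fun t ht => ?_) measurableSet_Ioi
    simp only [fE, sub_self, Complex.cpow_zero, one_smul, Complex.real_smul]
    push_cast
    ring
  have h3 := h2.re
  refine h3.congr (Filter.Eventually.of_forall fun t => ?_)
  exact Complex.ofReal_re _

lemma integral_exp_neg_log_sq :
    ∫ t in Ioi (0:ℝ), Real.exp (-t) * (Real.log t) ^ 2
      = Real.eulerMascheroniConstant ^ 2 + Real.pi ^ 2 / 6 := by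
  have h := G2_one
  rw [G2, mellin] at h
  have heq : EqOn (fun t : ℝ => (t:ℂ) ^ ((1:ℂ) - 1) • (Real.log t • Real.log t • fE t))
      (fun t : ℝ => ((Real.exp (-t) * (Real.log t) ^ 2 : ℝ) : ℂ)) (Ioi 0) := by
    intro t ht
    simp only [fE, sub_self, Complex.cpow_zero, one_smul, Complex.real_smul]
    push_cast
    ring
  rw [setIntegral_congr_fun measurableSet_Ioi heq] at h
  have h4 := (integral_ofReal (𝕜 := ℂ) (μ := volume.restrict (Ioi 0))
    (f := fun t => Real.exp (-t) * Real.log t ^ 2)).symm.trans h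
  refine Complex.ofReal_injective (h4.trans ?_)
  push_cast
  ring

end GammaAux

namespace GammaAux

lemma integrable_main {x : ℝ} (hx : 0 < x) :
    IntegrableOn (fun u : ℝ => Real.exp (-u) * Real.log u / u) (Ioi x) := by
  set C : ℝ := |Real.log x| / x + 1 with hC
  have hCint : IntegrableOn (fun u : ℝ => C * Real.exp (-u)) (Ioi x) := by
    have := exp_neg_integrableOn_Ioi x (one_pos)
    simpa [IntegrableOn] using this.const_mul C
  refine hCint.mono' ?_ ?_
  · refine ContinuousOn.aestronglyMeasurable ?_ measurableSet_Ioi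
    refine ContinuousOn.div ?_ continuousOn_id (fun u hu => (hx.trans hu).ne')
    exact ((Real.continuous_exp.comp continuous_neg).continuousOn).mul
      (Real.continuousOn_log.mono fun u hu => (hx.trans hu).ne')
  · rw [ae_restrict_iff' measurableSet_Ioi]
    refine Filter.Eventually.of_forall fun u hu => ?_
    have hu0 : 0 < u := hx.trans hu
    have hkey : |Real.log u| / u ≤ C := by
      rcases le_or_gt u 1 with h1 | h1
      · have hx1 : x ≤ 1 := (le_of_lt hu).trans h1
        have hlogu : |Real.log u| ≤ |Real.log x| := by
          rw [abs_of_nonpos (Real.log_nonpos hu0.le h1),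
            abs_of_nonpos (Real.log_nonpos hx.le hx1)]
          exact neg_le_neg (Real.log_le_log hx (le_of_lt hu))
        have : |Real.log u| / u ≤ |Real.log x| / x :=
          div_le_div₀ (abs_nonneg _) hlogu hx (le_of_lt hu)
        linarith
      · have hlog : |Real.log u| ≤ u := by
          rw [abs_of_nonneg (Real.log_nonneg h1.le)]
          linarith [Real.log_le_sub_one_of_pos hu0]
        have : |Real.log u| / u ≤ 1 := by
          rw [div_le_one hu0]; exact hlog
        have hC0 : 0 ≤ |Real.log x| / x := by positivity
        linarith
    have : ‖Real.exp (-u) * Real.log u / u‖ = Real.exp (-u) * (|Real.log u| / u) := by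
      rw [Real.norm_eq_abs, abs_div, abs_mul, abs_of_nonneg (Real.exp_pos _).le,
        abs_of_nonneg hu0.le, mul_div_assoc]
    rw [this]
    calc Real.exp (-u) * (|Real.log u| / u) ≤ Real.exp (-u) * C := by
          exact mul_le_mul_of_nonneg_left hkey (Real.exp_pos _).le
      _ = C * Real.exp (-u) := mul_comm _ _

lemma tendsto_aux_top : Tendsto (fun u : ℝ => Real.exp (-u) * (Real.log u) ^ 2 / 2)
    atTop (𝓝 0) := by
  have h : Tendsto (fun u : ℝ => u ^ (2:ℕ) * Real.exp (-u) / 2) atTop (𝓝 0) := by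
    have h0 := (tendsto_rpow_mul_exp_neg_mul_atTop_nhds_zero 2 1 one_pos).div_const 2
    simp only [neg_one_mul] at h0
    rw [show ((2:ℝ)) = ((2:ℕ):ℝ) by norm_num] at h0
    simp_rw [Real.rpow_natCast] at h0
    simpa using h0
  apply squeeze_zero_norm' ?_ h
  filter_upwards [eventually_ge_atTop (1:ℝ)] with u hu
  have hu0 : (0:ℝ) < u := lt_of_lt_of_le one_pos hu
  have hlog : |Real.log u| ≤ u := by
    rw [abs_of_nonneg (Real.log_nonneg hu)]
    linarith [Real.log_le_sub_one_of_pos hu0]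
  have h2 : (Real.log u) ^ 2 ≤ u ^ 2 := by
    rw [← sq_abs]
    exact pow_le_pow_left₀ (abs_nonneg _) hlog 2
  have : ‖Real.exp (-u) * Real.log u ^ 2 / 2‖ = Real.exp (-u) * (Real.log u)^2 / 2 := by
    rw [Real.norm_eq_abs, abs_of_nonneg (by positivity)]
  rw [this]
  calc Real.exp (-u) * Real.log u ^ 2 / 2 ≤ Real.exp (-u) * u ^ 2 / 2 := by
        have := mul_le_mul_of_nonneg_left h2 (Real.exp_pos (-u)).le
        linarith
    _ = u ^ 2 * Real.exp (-u) / 2 := by ring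

lemma ibp {x : ℝ} (hx : 0 < x) :
    ∫ u in Ioi x, Real.exp (-u) * Real.log u / u
      = -(Real.exp (-x) * (Real.log x) ^ 2 / 2)
        + (∫ u in Ioi x, Real.exp (-u) * (Real.log u) ^ 2) / 2 := by
  set f : ℝ → ℝ := fun u => Real.exp (-u) * (Real.log u) ^ 2 / 2 with hf
  have hsq : IntegrableOn (fun u : ℝ => Real.exp (-u) * (Real.log u) ^ 2) (Ioi x) :=
    integrable_exp_neg_log_sq.mono_set (Ioi_subset_Ioi hx.le)
  have hderiv : ∀ u ∈ Ioi x, HasDerivAt f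
      (Real.exp (-u) * Real.log u / u - Real.exp (-u) * (Real.log u) ^ 2 / 2) u := by
    intro u hu
    have hu0 : 0 < u := hx.trans hu
    have h1 : HasDerivAt (fun u : ℝ => Real.exp (-u)) (-Real.exp (-u)) u := by
      simpa [Function.comp_def] using (Real.hasDerivAt_exp (-u)).comp u (hasDerivAt_neg u)
    have h2 : HasDerivAt (fun u : ℝ => (Real.log u) ^ 2)
        ((2:ℕ) * Real.log u ^ 1 * (1/u)) u := by
      simpa [Pi.pow_def] using (Real.hasDerivAt_log hu0.ne').pow 2
    have := (h1.mul h2).div_const 2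
    refine this.congr_deriv ?_
    field_simp
    ring
  have hcont : ContinuousWithinAt f (Ici x) x := by
    apply ContinuousAt.continuousWithinAt
    have : ContinuousAt (fun u : ℝ => (Real.log u) ^ 2) x :=
      (Real.continuousAt_log hx.ne').pow 2
    exact (((Real.continuous_exp.comp continuous_neg).continuousAt).mul this).div_const 2
  have hint : IntegrableOn (fun u : ℝ =>
      Real.exp (-u) * Real.log u / u - Real.exp (-u) * (Real.log u) ^ 2 / 2) (Ioi x) :=
    (integrable_main hx).sub (hsq.div_const 2)
  have := integral_Ioi_of_hasDerivAt_of_tendsto hcont hderiv hint tendsto_aux_top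
  rw [integral_sub (integrable_main hx) (hsq.div_const 2)] at this
  rw [integral_div] at this
  have hfx : f x = Real.exp (-x) * (Real.log x) ^ 2 / 2 := rfl
  rw [zero_sub, hfx] at this
  linarith

end GammaAux

namespace GammaAux

lemma T1 : Tendsto (fun x : ℝ => (1 - Real.exp (-x)) * (Real.log x) ^ 2 / 2)
    (𝓝[>] (0:ℝ)) (𝓝 0) := by
  have h0 : Tendsto (fun x : ℝ => Real.log x * x ^ ((1:ℝ)/2)) (𝓝[>] (0:ℝ)) (𝓝 0) :=
    tendsto_log_mul_rpow_nhdsGT_zero (by norm_num)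
  have h1 : Tendsto (fun x : ℝ => (Real.log x * x ^ ((1:ℝ)/2)) ^ 2 / 2)
      (𝓝[>] (0:ℝ)) (𝓝 0) := by
    have := (h0.pow 2).div_const 2
    simpa using this
  apply squeeze_zero_norm' ?_ h1
  filter_upwards [self_mem_nhdsWithin] with x hx
  have hx0 : (0:ℝ) < x := hx
  have hexp : 0 ≤ 1 - Real.exp (-x) := by
    have : Real.exp (-x) ≤ 1 := Real.exp_le_one_iff.mpr (by linarith)
    linarith
  have hexp2 : 1 - Real.exp (-x) ≤ x := by
    have := Real.add_one_le_exp (-x)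
    linarith
  have hsq : (Real.log x * x ^ ((1:ℝ)/2)) ^ 2 = x * (Real.log x) ^ 2 := by
    rw [mul_pow, ← Real.rpow_natCast (x ^ ((1:ℝ)/2)) 2, ← Real.rpow_mul hx0.le]
    norm_num
    ring
  rw [Real.norm_eq_abs, abs_of_nonneg (by positivity), hsq]
  have : (1 - Real.exp (-x)) * Real.log x ^ 2 ≤ x * Real.log x ^ 2 :=
    mul_le_mul_of_nonneg_right hexp2 (sq_nonneg _)
  linarith

lemma T2 : Tendsto (fun x : ℝ => ∫ u in Ioi x, Real.exp (-u) * (Real.log u) ^ 2)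
    (𝓝[>] (0:ℝ)) (𝓝 (Real.eulerMascheroniConstant ^ 2 + Real.pi ^ 2 / 6)) := by
  rw [← integral_exp_neg_log_sq]
  set g : ℝ → ℝ := fun u => Real.exp (-u) * (Real.log u) ^ 2 with hg
  have key : Tendsto (fun x : ℝ => ∫ u, indicator (Ioi x) g u ∂(volume.restrict (Ioi 0)))
      (𝓝[>] (0:ℝ)) (𝓝 (∫ u in Ioi 0, g u)) := by
    apply tendsto_integral_filter_of_dominated_convergence (fun u => ‖g u‖)
    · filter_upwards [self_mem_nhdsWithin] with x hx
      exact (integrable_exp_neg_log_sq.aestronglyMeasurable).indicator measurableSet_Ioi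
    · filter_upwards with x
      exact .of_forall fun u => norm_indicator_le_norm_self g u
    · exact integrable_exp_neg_log_sq.norm
    · rw [ae_restrict_iff' measurableSet_Ioi]
      refine Filter.Eventually.of_forall fun u hu => ?_
      have : ∀ᶠ x in 𝓝[>] (0:ℝ), x < u := by
        have h1 : Iio u ∈ 𝓝 (0:ℝ) := Iio_mem_nhds hu
        have h2 : Iio u ∈ 𝓝[>] (0:ℝ) := nhdsWithin_le_nhds h1
        filter_upwards [h2] with x hxu
        exact hxu
      refine Tendsto.congr' ?_ tendsto_const_nhds
      filter_upwards [this] with x hxu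
      exact (indicator_of_mem (by exact hxu) g).symm
  refine key.congr' ?_
  filter_upwards [self_mem_nhdsWithin] with x hx
  rw [integral_indicator measurableSet_Ioi, Measure.restrict_restrict measurableSet_Ioi]
  congr 1
  rw [inter_eq_left.mpr (Ioi_subset_Ioi (le_of_lt hx))]

end GammaAux

open GammaAux in
theorem expIntegral_log_tendsto :
    Tendsto (fun x : ℝ =>
        (∫ u in Set.Ioi x, Real.exp (-u) * Real.log u / u) + (Real.log x) ^ 2 / 2)
      (nhdsWithin 0 (Set.Ioi 0))
      (nhds (Real.eulerMascheroniConstant ^ 2 / 2 + Real.pi ^ 2 / 12)) := by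
  have hcomb := T1.add (T2.div_const 2)
  rw [zero_add] at hcomb
  have : (Real.eulerMascheroniConstant ^ 2 + Real.pi ^ 2 / 6) / 2
      = Real.eulerMascheroniConstant ^ 2 / 2 + Real.pi ^ 2 / 12 := by ring
  rw [this] at hcomb
  refine hcomb.congr' ?_
  filter_upwards [self_mem_nhdsWithin] with x hx
  have hx0 : (0:ℝ) < x := hx
  rw [ibp hx0]
  have hexpx : Real.exp (-x) * Real.log x ^ 2 / 2
      = Real.exp (-x) * (Real.log x ^ 2 / 2) := by ring
  ring
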